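/- Suppose max_{|z|≤2πδ}[α|U(z)|²] ≤ α·a² and 2πδκ·(max_{|z|≤2πδ}|1 − ε^{(L)}(z)| + α a²) < cos φ. Then the affine map Φ ↦ U^{inc} − KΦ, where (KΦ)(z) = (iκ²/(2Γ))∫_{−2πδ}^{2πδ} e^{iΓ|z−z₀|}[1 − (ε^{(L)}(z₀) + α|U(z₀)|²)]Φ(z₀)dz₀ and Γ = κcosφ, is a contraction on L²([−2πδ, 2πδ]) and hence has a unique fixed point. -/

import Mathlib

/-- The integral operator `(KΦ)(z) = (iκ²/(2Γ))∫ e^{iΓ|z−z₀|}[1 − (ε^{(L)}(z₀) + α|U(z₀)|²)]Φ(z₀)dz₀`. -/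
noncomputable def Kop (δ κ α Γ : ℝ) (εL : ℝ → ℂ) (U Φ : ℝ → ℂ) (z : ℝ) : ℂ :=
  (Complex.I * κ ^ 2 / (2 * Γ)) *
    ∫ z₀ in (-(2 * Real.pi * δ))..(2 * Real.pi * δ),
      Complex.exp (Complex.I * Γ * |z - z₀|) *
        (1 - (εL z₀ + ((α * ‖U z₀‖ ^ 2 : ℝ) : ℂ))) * Φ z₀

open MeasureTheory Set intervalIntegral

namespace Stmt16

lemma aux_cs (b : ℝ) (hb : 0 < b) (f : ℝ → ℝ) (hf : Continuous f) (hf0 : ∀ x, 0 ≤ f x) :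
    ∫ x in (-b)..b, f x ≤ Real.sqrt (2 * b) * Real.sqrt (∫ x in (-b)..b, f x ^ 2) := by
  have hle : (-b : ℝ) ≤ b := by linarith
  set A := ∫ x in (-b)..b, f x ^ 2 with hA
  have hA0 : 0 ≤ A := intervalIntegral.integral_nonneg hle fun u _ => sq_nonneg _
  have key : ∀ s : ℝ, 0 < s → ∫ x in (-b)..b, f x ≤ (s * A + 2 * b / s) / 2 := by
    intro s hs
    have h1 : ∫ x in (-b)..b, f x ≤ ∫ x in (-b)..b, (s * f x ^ 2 + 1 / s) / 2 := by
      apply intervalIntegral.integral_mono_on hle (hf.intervalIntegrable _ _)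
        ((((continuous_const.mul (hf.pow 2)).add continuous_const).div_const 2).intervalIntegrable _ _)
      intro x _
      show f x ≤ (s * f x ^ 2 + 1 / s) / 2
      rw [le_div_iff₀ (by norm_num : (0:ℝ) < 2), div_eq_mul_inv]
      nlinarith [hf0 x, sq_nonneg (s * f x - 1), mul_pos hs (inv_pos.2 hs),
        mul_inv_cancel₀ (ne_of_gt hs)]
    have h3 : ∫ x in (-b)..b, (s * f x ^ 2 + 1 / s) / 2 = (s * A + 2 * b / s) / 2 := by
      rw [intervalIntegral.integral_div, intervalIntegral.integral_add (f := fun x => s * f x ^ 2)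
        ((continuous_const.mul (hf.pow 2)).intervalIntegrable _ _) (intervalIntegrable_const),
        intervalIntegral.integral_const_mul, intervalIntegral.integral_const, ← hA]
      rw [smul_eq_mul]; ring
    linarith
  rcases eq_or_lt_of_le hA0 with h0 | hpos
  · have hR : Real.sqrt (2 * b) * Real.sqrt A = 0 := by rw [← h0, Real.sqrt_zero, mul_zero]
    rw [hR]
    refine le_of_forall_pos_le_add ?_
    intro ε hε
    have hk := key (b / ε) (by positivity)
    rw [← h0, mul_zero, zero_add] at hk
    have : ∫ x in (-b)..b, f x ≤ ε := by
      calc ∫ x in (-b)..b, f x ≤ (2 * b / (b / ε)) / 2 := hk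
        _ = ε := by field_simp
    linarith
  · set u := Real.sqrt A with hu
    set v := Real.sqrt (2 * b) with hv
    have hu0 : 0 < u := Real.sqrt_pos.2 hpos
    have hv0 : 0 < v := Real.sqrt_pos.2 (by linarith)
    have hu2 : u ^ 2 = A := Real.sq_sqrt hA0
    have hv2 : v ^ 2 = 2 * b := Real.sq_sqrt (by linarith)
    have hk := key (v / u) (by positivity)
    have heq : ((v / u) * A + 2 * b / (v / u)) / 2 = v * u := by
      rw [← hu2, ← hv2]; field_simp; ring
    rw [heq] at hk
    linarith

lemma norm_coeff (κ Γ : ℝ) (hκ : 0 < κ) (hΓ : 0 < Γ) :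
    ‖(Complex.I * (κ:ℂ) ^ 2 / (2 * (Γ:ℂ)))‖ = κ ^ 2 / (2 * Γ) := by
  simp [map_div₀, map_mul,
    abs_of_pos hκ, abs_of_pos hΓ]

lemma norm_exp_kernel (Γ r : ℝ) : ‖Complex.exp (Complex.I * (Γ:ℂ) * ((r:ℝ):ℂ))‖ = 1 := by
  simp [Complex.norm_exp]

noncomputable def g (α : ℝ) (εL U : ℝ → ℂ) (z₀ : ℝ) : ℂ :=
  1 - (εL z₀ + ((α * ‖U z₀‖ ^ 2 : ℝ) : ℂ))

lemma g_cont {α : ℝ} {εL U : ℝ → ℂ} (hεL : Continuous εL) (hU : Continuous U) :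
    Continuous (g α εL U) := by
  unfold g; fun_prop

lemma Kop_eq (δ κ α Γ : ℝ) (εL U Φ : ℝ → ℂ) (z : ℝ) :
    Kop δ κ α Γ εL U Φ z = (Complex.I * κ ^ 2 / (2 * Γ)) *
      ∫ z₀ in (-(2 * Real.pi * δ))..(2 * Real.pi * δ),
        Complex.exp (Complex.I * Γ * ((|z - z₀| : ℝ) : ℂ)) * g α εL U z₀ * Φ z₀ := rfl

lemma g_norm_le {α a M : ℝ} {εL U : ℝ → ℂ} (hα : 0 ≤ α) {z₀ : ℝ}
    (hMz : ‖1 - εL z₀‖ ≤ M) (hUz : ‖U z₀‖ ≤ a) :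
    ‖g α εL U z₀‖ ≤ M + α * a ^ 2 := by
  have h1 : g α εL U z₀ = (1 - εL z₀) - ((α * ‖U z₀‖ ^ 2 : ℝ) : ℂ) := by unfold g; ring
  rw [h1]
  refine (norm_sub_le _ _).trans ?_
  have h2 : ‖((α * ‖U z₀‖ ^ 2 : ℝ) : ℂ)‖ = α * ‖U z₀‖ ^ 2 := by
    rw [Complex.norm_real, Real.norm_of_nonneg (by positivity)]
  rw [h2]
  have h3 : α * ‖U z₀‖ ^ 2 ≤ α * a ^ 2 :=
    mul_le_mul_of_nonneg_left (pow_le_pow_left₀ (norm_nonneg _) hUz 2) hα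
  linarith

lemma Kop_cont {δ κ α Γ : ℝ} {εL U Ψ : ℝ → ℂ} (hεL : Continuous εL) (hU : Continuous U)
    (hΨ : Continuous Ψ) : Continuous (fun z => Kop δ κ α Γ εL U Ψ z) := by
  simp only [Kop_eq]
  apply continuous_const.mul
  apply intervalIntegral.continuous_parametric_intervalIntegral_of_continuous' _ _ _
  apply Continuous.mul
  apply Continuous.mul
  · exact Complex.continuous_exp.comp (continuous_const.mul
      (Complex.continuous_ofReal.comp ((continuous_fst.sub continuous_snd).abs)))
  · exact (g_cont hεL hU).comp continuous_snd
  · exact hΨ.comp continuous_snd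

lemma Kop_congr {δ κ α Γ : ℝ} {εL U : ℝ → ℂ} {Φ₁ Φ₂ : ℝ → ℂ}
    (h : ∀ z ∈ Icc (-(2 * Real.pi * δ)) (2 * Real.pi * δ), Φ₁ z = Φ₂ z)
    (hle : -(2 * Real.pi * δ) ≤ 2 * Real.pi * δ) (z : ℝ) :
    Kop δ κ α Γ εL U Φ₁ z = Kop δ κ α Γ εL U Φ₂ z := by
  simp only [Kop_eq]
  congr 1
  apply intervalIntegral.integral_congr
  intro z₀ hz₀
  rw [uIcc_of_le hle] at hz₀
  simp [h z₀ hz₀]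

lemma Kop_sub {δ κ α Γ : ℝ} {εL U : ℝ → ℂ} (hεL : Continuous εL) (hU : Continuous U)
    {Φ₁ Φ₂ : ℝ → ℂ}
    (h₁ : ContinuousOn Φ₁ (Icc (-(2 * Real.pi * δ)) (2 * Real.pi * δ)))
    (h₂ : ContinuousOn Φ₂ (Icc (-(2 * Real.pi * δ)) (2 * Real.pi * δ)))
    (hle : -(2 * Real.pi * δ) ≤ 2 * Real.pi * δ) (z : ℝ) :
    Kop δ κ α Γ εL U Φ₁ z - Kop δ κ α Γ εL U Φ₂ z
      = Kop δ κ α Γ εL U (fun x => Φ₁ x - Φ₂ x) z := by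
  simp only [Kop_eq]
  rw [← mul_sub]
  congr 1
  have hker : Continuous fun z₀ =>
      Complex.exp (Complex.I * Γ * ((|z - z₀| : ℝ) : ℂ)) * g α εL U z₀ := by
    apply Continuous.mul _ (g_cont hεL hU)
    exact Complex.continuous_exp.comp (continuous_const.mul
      (Complex.continuous_ofReal.comp ((continuous_const.sub continuous_id).abs)))
  have hi : ∀ {Φ : ℝ → ℂ}, ContinuousOn Φ (Icc (-(2 * Real.pi * δ)) (2 * Real.pi * δ)) →
      IntervalIntegrable (fun z₀ => Complex.exp (Complex.I * Γ * ((|z - z₀| : ℝ) : ℂ)) *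
        g α εL U z₀ * Φ z₀) volume (-(2 * Real.pi * δ)) (2 * Real.pi * δ) := by
    intro Φ hΦ
    apply ContinuousOn.intervalIntegrable
    rw [uIcc_of_le hle]
    exact (hker.continuousOn).mul hΦ
  rw [← intervalIntegral.integral_sub (hi h₁) (hi h₂)]
  apply intervalIntegral.integral_congr
  intro z₀ _
  ring

lemma Kop_bound {δ κ α a Γ M : ℝ} {εL U : ℝ → ℂ} (hκ : 0 < κ) (hΓ : 0 < Γ) (hα : 0 ≤ α)
    (hεL : Continuous εL) (hU : Continuous U)
    (hUa : ∀ z ∈ Icc (-(2 * Real.pi * δ)) (2 * Real.pi * δ), ‖U z‖ ≤ a)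
    (hM : ∀ z ∈ Icc (-(2 * Real.pi * δ)) (2 * Real.pi * δ), ‖1 - εL z‖ ≤ M)
    (hle : -(2 * Real.pi * δ) ≤ 2 * Real.pi * δ)
    {Ψ : ℝ → ℂ} (hΨ : Continuous Ψ) (z : ℝ) :
    ‖Kop δ κ α Γ εL U Ψ z‖ ≤ κ ^ 2 / (2 * Γ) *
      ((M + α * a ^ 2) * ∫ z₀ in (-(2 * Real.pi * δ))..(2 * Real.pi * δ), ‖Ψ z₀‖) := by
  rw [Kop_eq, norm_mul, norm_coeff κ Γ hκ hΓ]
  have hc : 0 ≤ κ ^ 2 / (2 * Γ) := by positivity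
  apply mul_le_mul_of_nonneg_left _ hc
  calc ‖∫ z₀ in (-(2 * Real.pi * δ))..(2 * Real.pi * δ),
        Complex.exp (Complex.I * Γ * ((|z - z₀| : ℝ) : ℂ)) * g α εL U z₀ * Ψ z₀‖
      ≤ ∫ z₀ in (-(2 * Real.pi * δ))..(2 * Real.pi * δ),
        ‖Complex.exp (Complex.I * Γ * ((|z - z₀| : ℝ) : ℂ)) * g α εL U z₀ * Ψ z₀‖ :=
        intervalIntegral.norm_integral_le_integral_norm hle
    _ ≤ ∫ z₀ in (-(2 * Real.pi * δ))..(2 * Real.pi * δ), (M + α * a ^ 2) * ‖Ψ z₀‖ := by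
        apply intervalIntegral.integral_mono_on hle
        · apply Continuous.intervalIntegrable
          apply Continuous.norm
          apply Continuous.mul _ hΨ
          apply Continuous.mul _ (g_cont hεL hU)
          exact Complex.continuous_exp.comp (continuous_const.mul
            (Complex.continuous_ofReal.comp ((continuous_const.sub continuous_id).abs)))
        · exact (continuous_const.mul hΨ.norm).intervalIntegrable _ _
        · intro z₀ hz₀
          rw [norm_mul, norm_mul, norm_exp_kernel, one_mul]
          exact mul_le_mul_of_nonneg_right (g_norm_le hα (hM z₀ hz₀) (hUa z₀ hz₀)) (norm_nonneg _)
    _ = (M + α * a ^ 2) * ∫ z₀ in (-(2 * Real.pi * δ))..(2 * Real.pi * δ), ‖Ψ z₀‖ :=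
        intervalIntegral.integral_const_mul _ _

end Stmt16

open Stmt16

/-- Under the weak-nonlinearity smallness condition (59), the affine map
`Φ ↦ U^{inc} − KΦ` is a contraction in the `L²` norm on `[−2πδ, 2πδ]` and has a
unique fixed point. -/
theorem stmt_16 (δ κ α a φ : ℝ) (hδ : 0 < δ) (hκ : 0 < κ) (hα : 0 < α) (ha : 0 < a)
    (hφ : |φ| < Real.pi / 2) (Γ : ℝ) (hΓ : Γ = κ * Real.cos φ)
    (εL : ℝ → ℂ) (hεL : Continuous εL)
    (U : ℝ → ℂ) (hU : Continuous U)
    (hUa : ∀ z ∈ Set.Icc (-(2 * Real.pi * δ)) (2 * Real.pi * δ), ‖U z‖ ≤ a)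
    (M : ℝ)
    (hM : ∀ z ∈ Set.Icc (-(2 * Real.pi * δ)) (2 * Real.pi * δ), ‖1 - εL z‖ ≤ M)
    (hcond : 2 * Real.pi * δ * κ * (M + α * a ^ 2) < Real.cos φ) :
    (∃ t : ℝ, 0 ≤ t ∧ t < 1 ∧
      ∀ Φ₁ Φ₂ : ℝ → ℂ,
        ContinuousOn Φ₁ (Set.Icc (-(2 * Real.pi * δ)) (2 * Real.pi * δ)) →
        ContinuousOn Φ₂ (Set.Icc (-(2 * Real.pi * δ)) (2 * Real.pi * δ)) →
        Real.sqrt (∫ z in (-(2 * Real.pi * δ))..(2 * Real.pi * δ),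
            ‖(a * Complex.exp (-Complex.I * Γ * (z - 2 * Real.pi * δ)) -
                Kop δ κ α Γ εL U Φ₁ z) -
              (a * Complex.exp (-Complex.I * Γ * (z - 2 * Real.pi * δ)) -
                Kop δ κ α Γ εL U Φ₂ z)‖ ^ 2) ≤
          t * Real.sqrt (∫ z in (-(2 * Real.pi * δ))..(2 * Real.pi * δ),
            ‖Φ₁ z - Φ₂ z‖ ^ 2)) ∧
    (∃ Φ : ℝ → ℂ, ContinuousOn Φ (Set.Icc (-(2 * Real.pi * δ)) (2 * Real.pi * δ)) ∧
      (∀ z ∈ Set.Icc (-(2 * Real.pi * δ)) (2 * Real.pi * δ),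
        Φ z = a * Complex.exp (-Complex.I * Γ * (z - 2 * Real.pi * δ)) -
          Kop δ κ α Γ εL U Φ z) ∧
      ∀ Ψ : ℝ → ℂ, ContinuousOn Ψ (Set.Icc (-(2 * Real.pi * δ)) (2 * Real.pi * δ)) →
        (∀ z ∈ Set.Icc (-(2 * Real.pi * δ)) (2 * Real.pi * δ),
          Ψ z = a * Complex.exp (-Complex.I * Γ * (z - 2 * Real.pi * δ)) -
            Kop δ κ α Γ εL U Ψ z) →
        ∀ z ∈ Set.Icc (-(2 * Real.pi * δ)) (2 * Real.pi * δ), Ψ z = Φ z) := by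
  have hπ := Real.pi_pos
  have hLpos : 0 < 2 * Real.pi * δ := by positivity
  have hle : -(2 * Real.pi * δ) ≤ 2 * Real.pi * δ := by linarith
  have habs := abs_lt.mp hφ
  have hcos : 0 < Real.cos φ :=
    Real.cos_pos_of_mem_Ioo ⟨by linarith [habs.1], habs.2⟩
  have hΓpos : 0 < Γ := by rw [hΓ]; exact mul_pos hκ hcos
  have hM0 : 0 ≤ M := le_trans (norm_nonneg _) (hM 0 ⟨by linarith, by linarith⟩)
  have hA0 : 0 ≤ M + α * a ^ 2 := by positivity
  -- the contraction constant
  set t : ℝ := 2 * (2 * Real.pi * δ) * (κ ^ 2 / (2 * Γ)) * (M + α * a ^ 2) with htdef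
  have ht0 : 0 ≤ t := by positivity
  have ht1 : t < 1 := by
    have htval : t = 2 * Real.pi * δ * κ * (M + α * a ^ 2) / Real.cos φ := by
      rw [htdef, hΓ]; field_simp
    rw [htval, div_lt_one hcos]
    exact hcond
  -- the interval as compact space
  have hIcc0 : (0 : ℝ) ∈ Icc (-(2 * Real.pi * δ)) (2 * Real.pi * δ) := ⟨by linarith, by linarith⟩
  -- extension operator
  let ext : C(Icc (-(2 * Real.pi * δ)) (2 * Real.pi * δ), ℂ) → ℝ → ℂ :=
    fun f => Set.IccExtend hle ⇑f
  have hext_cont : ∀ f, Continuous (ext f) := fun f => f.continuous.comp continuous_projIcc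
  have hext_eq : ∀ f z (hz : z ∈ Icc (-(2 * Real.pi * δ)) (2 * Real.pi * δ)),
      ext f z = f ⟨z, hz⟩ := fun f z hz => Set.IccExtend_of_mem hle _ hz
  -- incident wave
  have hUinc : Continuous fun z : ℝ =>
      (a : ℂ) * Complex.exp (-Complex.I * Γ * (z - 2 * Real.pi * δ)) := by fun_prop
  -- the affine map on continuous functions
  let T : C(Icc (-(2 * Real.pi * δ)) (2 * Real.pi * δ), ℂ) →
      C(Icc (-(2 * Real.pi * δ)) (2 * Real.pi * δ), ℂ) :=
    fun f => ⟨fun x => (a : ℂ) * Complex.exp (-Complex.I * Γ * ((x : ℝ) - 2 * Real.pi * δ)) -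
        Kop δ κ α Γ εL U (ext f) (x : ℝ),
      (hUinc.comp continuous_subtype_val).sub
        ((Kop_cont hεL hU (hext_cont f)).comp continuous_subtype_val)⟩
  -- Lipschitz estimate for T
  have key : ∀ f g', dist (T f) (T g') ≤ t * dist f g' := by
    intro f g'
    rw [ContinuousMap.dist_le (mul_nonneg ht0 dist_nonneg)]
    intro x
    rw [dist_eq_norm]
    show ‖((a : ℂ) * Complex.exp (-Complex.I * Γ * ((x : ℝ) - 2 * Real.pi * δ)) -
        Kop δ κ α Γ εL U (ext f) (x : ℝ)) -
      ((a : ℂ) * Complex.exp (-Complex.I * Γ * ((x : ℝ) - 2 * Real.pi * δ)) -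
        Kop δ κ α Γ εL U (ext g') (x : ℝ))‖ ≤ t * dist f g'
    have hre : ((a : ℂ) * Complex.exp (-Complex.I * Γ * ((x : ℝ) - 2 * Real.pi * δ)) -
        Kop δ κ α Γ εL U (ext f) (x : ℝ)) -
      ((a : ℂ) * Complex.exp (-Complex.I * Γ * ((x : ℝ) - 2 * Real.pi * δ)) -
        Kop δ κ α Γ εL U (ext g') (x : ℝ))
        = Kop δ κ α Γ εL U (ext g') (x : ℝ) - Kop δ κ α Γ εL U (ext f) (x : ℝ) := by ring
    rw [hre, Kop_sub hεL hU (hext_cont g').continuousOn (hext_cont f).continuousOn hle]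
    refine (Kop_bound hκ hΓpos hα.le hεL hU hUa hM hle
      ((hext_cont g').sub (hext_cont f)) (x : ℝ)).trans ?_
    have hint : (∫ z₀ in (-(2 * Real.pi * δ))..(2 * Real.pi * δ),
        ‖(fun x => ext g' x - ext f x) z₀‖) ≤ 2 * (2 * Real.pi * δ) * dist f g' := by
      have h1 : (∫ z₀ in (-(2 * Real.pi * δ))..(2 * Real.pi * δ),
          ‖(fun x => ext g' x - ext f x) z₀‖) ≤
          ∫ _z₀ in (-(2 * Real.pi * δ))..(2 * Real.pi * δ), dist f g' := by
        apply intervalIntegral.integral_mono_on hle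
          (((hext_cont g').sub (hext_cont f)).norm.intervalIntegrable _ _)
          (intervalIntegrable_const)
        intro z₀ _
        have e1 : ext g' z₀ - ext f z₀ =
            g' (projIcc _ _ hle z₀) - f (projIcc _ _ hle z₀) := rfl
        show ‖ext g' z₀ - ext f z₀‖ ≤ dist f g'
        rw [e1, ← dist_eq_norm]
        exact (ContinuousMap.dist_apply_le_dist _).trans_eq (dist_comm g' f)
      rw [intervalIntegral.integral_const, smul_eq_mul] at h1
      calc (∫ z₀ in (-(2 * Real.pi * δ))..(2 * Real.pi * δ),
            ‖(fun x => ext g' x - ext f x) z₀‖)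
          ≤ (2 * Real.pi * δ - -(2 * Real.pi * δ)) * dist f g' := h1
        _ = 2 * (2 * Real.pi * δ) * dist f g' := by ring
    calc κ ^ 2 / (2 * Γ) * ((M + α * a ^ 2) *
          ∫ z₀ in (-(2 * Real.pi * δ))..(2 * Real.pi * δ), ‖(fun x => ext g' x - ext f x) z₀‖)
        ≤ κ ^ 2 / (2 * Γ) * ((M + α * a ^ 2) * (2 * (2 * Real.pi * δ) * dist f g')) := by
          gcongr
      _ = t * dist f g' := by rw [htdef]; ring
  have hcontr : ContractingWith (Real.toNNReal t) T :=
    ⟨Real.toNNReal_lt_one.2 ht1,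
      LipschitzWith.of_dist_le_mul fun f g' => by
        rw [Real.coe_toNNReal t ht0]; exact key f g'⟩
  constructor
  · -- contraction statement
    refine ⟨t, ht0, ht1, ?_⟩
    intro Φ₁ Φ₂ h₁ h₂
    -- extended difference
    let D : ℝ → ℂ := Set.IccExtend hle
      ((Icc (-(2 * Real.pi * δ)) (2 * Real.pi * δ)).restrict (fun z => Φ₁ z - Φ₂ z))
    have hD : Continuous D :=
      (continuousOn_iff_continuous_restrict.mp (h₁.sub h₂)).comp continuous_projIcc
    have hDeq : ∀ z ∈ Icc (-(2 * Real.pi * δ)) (2 * Real.pi * δ), D z = Φ₁ z - Φ₂ z :=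
      fun z hz => Set.IccExtend_of_mem hle _ hz
    have hKdiff : ∀ z, Kop δ κ α Γ εL U Φ₁ z - Kop δ κ α Γ εL U Φ₂ z
        = Kop δ κ α Γ εL U D z := by
      intro z
      rw [Kop_sub hεL hU h₁ h₂ hle z]
      exact Kop_congr (fun z₀ hz₀ => (hDeq z₀ hz₀).symm) hle z
    have hLHS : (∫ z in (-(2 * Real.pi * δ))..(2 * Real.pi * δ),
        ‖(a * Complex.exp (-Complex.I * Γ * (z - 2 * Real.pi * δ)) - Kop δ κ α Γ εL U Φ₁ z) -
          (a * Complex.exp (-Complex.I * Γ * (z - 2 * Real.pi * δ)) -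
            Kop δ κ α Γ εL U Φ₂ z)‖ ^ 2)
        = ∫ z in (-(2 * Real.pi * δ))..(2 * Real.pi * δ), ‖Kop δ κ α Γ εL U D z‖ ^ 2 := by
      apply intervalIntegral.integral_congr
      intro z _
      have e : (a * Complex.exp (-Complex.I * Γ * (z - 2 * Real.pi * δ)) -
          Kop δ κ α Γ εL U Φ₁ z) -
        (a * Complex.exp (-Complex.I * Γ * (z - 2 * Real.pi * δ)) - Kop δ κ α Γ εL U Φ₂ z)
          = -(Kop δ κ α Γ εL U Φ₁ z - Kop δ κ α Γ εL U Φ₂ z) := by ring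
      simp only [e, norm_neg, hKdiff z]
    rw [hLHS]
    -- the constant bound B
    set I := ∫ z₀ in (-(2 * Real.pi * δ))..(2 * Real.pi * δ), ‖D z₀‖ with hI
    have hI0 : 0 ≤ I := intervalIntegral.integral_nonneg hle fun u _ => norm_nonneg _
    set B := κ ^ 2 / (2 * Γ) * ((M + α * a ^ 2) * I) with hB
    have hB0 : 0 ≤ B := by positivity
    have hub : ∀ z, ‖Kop δ κ α Γ εL U D z‖ ≤ B :=
      fun z => Kop_bound hκ hΓpos hα.le hεL hU hUa hM hle hD z
    have h2 : (∫ z in (-(2 * Real.pi * δ))..(2 * Real.pi * δ), ‖Kop δ κ α Γ εL U D z‖ ^ 2)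
        ≤ 2 * (2 * Real.pi * δ) * B ^ 2 := by
      have h2' : (∫ z in (-(2 * Real.pi * δ))..(2 * Real.pi * δ), ‖Kop δ κ α Γ εL U D z‖ ^ 2)
          ≤ ∫ _z in (-(2 * Real.pi * δ))..(2 * Real.pi * δ), B ^ 2 := by
        apply intervalIntegral.integral_mono_on hle
          (((Kop_cont hεL hU hD).norm.pow 2).intervalIntegrable _ _) intervalIntegrable_const
        intro z _
        exact pow_le_pow_left₀ (norm_nonneg _) (hub z) 2
      rw [intervalIntegral.integral_const, smul_eq_mul] at h2'
      calc (∫ z in (-(2 * Real.pi * δ))..(2 * Real.pi * δ), ‖Kop δ κ α Γ εL U D z‖ ^ 2)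
          ≤ (2 * Real.pi * δ - -(2 * Real.pi * δ)) * B ^ 2 := h2'
        _ = 2 * (2 * Real.pi * δ) * B ^ 2 := by ring
    have hDsq : (∫ z in (-(2 * Real.pi * δ))..(2 * Real.pi * δ), ‖D z‖ ^ 2)
        = ∫ z in (-(2 * Real.pi * δ))..(2 * Real.pi * δ), ‖Φ₁ z - Φ₂ z‖ ^ 2 := by
      apply intervalIntegral.integral_congr
      intro z hz
      rw [uIcc_of_le hle] at hz
      simp only [hDeq z hz]
    have hcs : I ≤ Real.sqrt (2 * (2 * Real.pi * δ)) *
        Real.sqrt (∫ z in (-(2 * Real.pi * δ))..(2 * Real.pi * δ), ‖Φ₁ z - Φ₂ z‖ ^ 2) := by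
      rw [← hDsq]
      exact aux_cs _ hLpos _ hD.norm (fun x => norm_nonneg _)
    -- put everything together
    have hsq2L : Real.sqrt (2 * (2 * Real.pi * δ)) * Real.sqrt (2 * (2 * Real.pi * δ))
        = 2 * (2 * Real.pi * δ) := Real.mul_self_sqrt (by linarith)
    have hRHS0 : 0 ≤ Real.sqrt (∫ z in (-(2 * Real.pi * δ))..(2 * Real.pi * δ),
        ‖Φ₁ z - Φ₂ z‖ ^ 2) := Real.sqrt_nonneg _
    calc Real.sqrt (∫ z in (-(2 * Real.pi * δ))..(2 * Real.pi * δ), ‖Kop δ κ α Γ εL U D z‖ ^ 2)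
        ≤ Real.sqrt (2 * (2 * Real.pi * δ) * B ^ 2) := Real.sqrt_le_sqrt h2
      _ = Real.sqrt (2 * (2 * Real.pi * δ)) * B := by
          rw [Real.sqrt_mul (by linarith : (0:ℝ) ≤ 2 * (2 * Real.pi * δ)),
            Real.sqrt_sq hB0]
      _ ≤ Real.sqrt (2 * (2 * Real.pi * δ)) * (κ ^ 2 / (2 * Γ) * ((M + α * a ^ 2) *
            (Real.sqrt (2 * (2 * Real.pi * δ)) *
              Real.sqrt (∫ z in (-(2 * Real.pi * δ))..(2 * Real.pi * δ),
                ‖Φ₁ z - Φ₂ z‖ ^ 2)))) := by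
          rw [hB]
          gcongr
      _ = (Real.sqrt (2 * (2 * Real.pi * δ)) * Real.sqrt (2 * (2 * Real.pi * δ))) *
            (κ ^ 2 / (2 * Γ)) * (M + α * a ^ 2) *
            Real.sqrt (∫ z in (-(2 * Real.pi * δ))..(2 * Real.pi * δ),
              ‖Φ₁ z - Φ₂ z‖ ^ 2) := by ring
      _ = t * Real.sqrt (∫ z in (-(2 * Real.pi * δ))..(2 * Real.pi * δ),
            ‖Φ₁ z - Φ₂ z‖ ^ 2) := by rw [hsq2L, htdef]
  · -- fixed point statement
    let Φ₀ := ContractingWith.fixedPoint T hcontr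
    have hfix : Function.IsFixedPt T Φ₀ := hcontr.fixedPoint_isFixedPt
    refine ⟨ext Φ₀, (hext_cont Φ₀).continuousOn, ?_, ?_⟩
    · intro z hz
      have h1 : ext Φ₀ z = Φ₀ ⟨z, hz⟩ := hext_eq Φ₀ z hz
      have h2 : (T Φ₀) ⟨z, hz⟩ = Φ₀ ⟨z, hz⟩ := by rw [hfix.eq]
      have h3 : (T Φ₀) ⟨z, hz⟩ =
          (a : ℂ) * Complex.exp (-Complex.I * Γ * ((z : ℝ) - 2 * Real.pi * δ)) -
            Kop δ κ α Γ εL U (ext Φ₀) z := rfl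
      rw [h1, ← h2, h3]
    · intro Ψ hΨ hΨeq z hz
      let gΨ : C(Icc (-(2 * Real.pi * δ)) (2 * Real.pi * δ), ℂ) :=
        ⟨(Icc (-(2 * Real.pi * δ)) (2 * Real.pi * δ)).restrict Ψ,
          continuousOn_iff_continuous_restrict.mp hΨ⟩
      have hgΨext : ∀ z₀ ∈ Icc (-(2 * Real.pi * δ)) (2 * Real.pi * δ), ext gΨ z₀ = Ψ z₀ :=
        fun z₀ hz₀ => hext_eq gΨ z₀ hz₀
      have hfixΨ : Function.IsFixedPt T gΨ := by
        show T gΨ = gΨ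
        ext x
        show (a : ℂ) * Complex.exp (-Complex.I * Γ * ((x : ℝ) - 2 * Real.pi * δ)) -
            Kop δ κ α Γ εL U (ext gΨ) (x : ℝ) = Ψ (x : ℝ)
        rw [Kop_congr hgΨext hle (x : ℝ)]
        exact (hΨeq (x : ℝ) x.2).symm
      have huniq : gΨ = Φ₀ := hcontr.fixedPoint_unique hfixΨ
      have h1 : Ψ z = gΨ ⟨z, hz⟩ := rfl
      rw [h1, huniq]
      exact (hext_eq Φ₀ z hz).symm
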